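/- Let f : ℝ_{>0}² → ℝ be Lebesgue measurable and subadditive in each variable however given the other. Then: (1) for every δ > 0 there exists R > 0 such that whenever x_1 > R and x_2 > R, f(x_1,x_2)/(x_1·x_2) < inf_{x_1,x_2>0} f(x_1,x_2)/(x_1·x_2) + δ; and (2) lim_{x_1→+∞} lim_{x_2→+∞} f(x_1,x_2)/(x_1·x_2) = lim_{x_2→+∞} lim_{x_1→+∞} f(x_1,x_2)/(x_1·x_2) = inf_{x_1,x_2>0} f(x_1,x_2)/(x_1·x_2). -/

import Mathlib

open Filter MeasureTheory Topology

open scoped ENNReal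

lemma fk_smul (φ : ℝ → ℝ) (hφ : ∀ a b : ℝ, 0 < a → 0 < b → φ (a + b) ≤ φ a + φ b)
    (y : ℝ) (hy : 0 < y) : ∀ (n : ℕ) (r : ℝ), 0 < r → φ (n * y + r) ≤ n * φ y + φ r := by
  intro n
  induction n with
  | zero => intro r hr; simp
  | succ n ih =>
    intro r hr
    have h0 : ((n : ℝ) + 1) * y + r = y + ((n : ℝ) * y + r) := by ring
    have hpos : 0 < (n : ℝ) * y + r := by positivity
    calc φ (((n : ℕ) + 1 : ℕ) * y + r) = φ (y + ((n : ℝ) * y + r)) := by push_cast; rw [h0]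
    _ ≤ φ y + φ ((n : ℝ) * y + r) := hφ _ _ hy hpos
    _ ≤ φ y + ((n : ℝ) * φ y + φ r) := by linarith [ih r hr]
    _ = ((n : ℕ) + 1 : ℕ) * φ y + φ r := by push_cast; ring

lemma fk_decomp (y x : ℝ) (hy : 0 < y) (hx : 2 * y ≤ x) :
    ∃ (k : ℕ) (r : ℝ), x = k * y + r ∧ y ≤ r ∧ r ≤ 2 * y ∧ 1 ≤ (k : ℝ) ∧
      (k : ℝ) ≤ x / y ∧ x / y - 2 ≤ (k : ℝ) := by
  have hx0 : 0 < x := lt_of_lt_of_le (by linarith) hx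
  have hdiv2 : (2 : ℝ) ≤ x / y := (le_div_iff₀ hy).2 (by linarith)
  have hfl2 : 2 ≤ ⌊x / y⌋₊ := by
    have := Nat.le_floor (α := ℝ) (n := 2) (by exact_mod_cast hdiv2)
    exact_mod_cast this
  refine ⟨⌊x / y⌋₊ - 1, x - (⌊x / y⌋₊ - 1 : ℕ) * y, by ring, ?_, ?_, ?_, ?_, ?_⟩
  · have hc : ((⌊x / y⌋₊ - 1 : ℕ) : ℝ) = (⌊x / y⌋₊ : ℝ) - 1 := by
      have : 1 ≤ ⌊x / y⌋₊ := by omega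
      push_cast [Nat.cast_sub this]; ring
    have hle : (⌊x / y⌋₊ : ℝ) ≤ x / y := Nat.floor_le (by positivity)
    rw [hc]
    have : ((⌊x / y⌋₊ : ℝ) - 1) * y ≤ (x / y - 1) * y := by nlinarith
    have hxy : (x / y - 1) * y = x - y := by field_simp
    linarith [this, hxy]
  · have hc : ((⌊x / y⌋₊ - 1 : ℕ) : ℝ) = (⌊x / y⌋₊ : ℝ) - 1 := by
      have : 1 ≤ ⌊x / y⌋₊ := by omega
      push_cast [Nat.cast_sub this]; ring
    have hlt : x / y < (⌊x / y⌋₊ : ℝ) + 1 := Nat.lt_floor_add_one _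
    rw [hc]
    have : (x / y - 2) * y < ((⌊x / y⌋₊ : ℝ) - 1) * y := by nlinarith
    have hxy : (x / y - 2) * y = x - 2 * y := by field_simp
    nlinarith
  · have hc : ((⌊x / y⌋₊ - 1 : ℕ) : ℝ) = (⌊x / y⌋₊ : ℝ) - 1 := by
      have : 1 ≤ ⌊x / y⌋₊ := by omega
      push_cast [Nat.cast_sub this]; ring
    rw [hc]
    have : (2 : ℝ) ≤ (⌊x / y⌋₊ : ℝ) := by exact_mod_cast hfl2
    linarith
  · have hc : ((⌊x / y⌋₊ - 1 : ℕ) : ℝ) = (⌊x / y⌋₊ : ℝ) - 1 := by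
      have : 1 ≤ ⌊x / y⌋₊ := by omega
      push_cast [Nat.cast_sub this]; ring
    have hle : (⌊x / y⌋₊ : ℝ) ≤ x / y := Nat.floor_le (by positivity)
    rw [hc]; linarith
  · have hc : ((⌊x / y⌋₊ - 1 : ℕ) : ℝ) = (⌊x / y⌋₊ : ℝ) - 1 := by
      have : 1 ≤ ⌊x / y⌋₊ := by omega
      push_cast [Nat.cast_sub this]; ring
    have hlt : x / y < (⌊x / y⌋₊ : ℝ) + 1 := Nat.lt_floor_add_one _
    rw [hc]; linarith

lemma fk_key (φ : ℝ → ℝ) (hφ : ∀ a b : ℝ, 0 < a → 0 < b → φ (a + b) ≤ φ a + φ b)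
    (y C x : ℝ) (hy : 0 < y) (hC : 0 ≤ C)
    (hbox : ∀ r : ℝ, y ≤ r → r ≤ 2 * y → φ r ≤ C) (hx : 2 * y ≤ x) :
    φ x / x ≤ φ y / y + (C + 2 * |φ y|) / x := by
  obtain ⟨k, r, hxe, hr1, hr2, hk1, hk2, hk3⟩ := fk_decomp y x hy hx
  have hx0 : 0 < x := lt_of_lt_of_le (by linarith) hx
  have hr0 : 0 < r := lt_of_lt_of_le hy hr1
  have h1 : φ x ≤ (k : ℝ) * φ y + C := by
    have := fk_smul φ hφ y hy k r hr0
    rw [hxe]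
    have := hbox r hr1 hr2
    linarith [fk_smul φ hφ y hy k r hr0]
  have h2 : (k : ℝ) * φ y ≤ (x / y) * φ y + 2 * |φ y| := by
    rcases abs_cases (φ y) with ⟨ha, hb⟩ | ⟨ha, hb⟩
    · nlinarith
    · nlinarith
  have h3 : φ x ≤ (x / y) * φ y + (2 * |φ y| + C) := by linarith
  have h4 : φ x / x ≤ ((x / y) * φ y + (2 * |φ y| + C)) / x := by gcongr
  calc φ x / x ≤ ((x / y) * φ y + (2 * |φ y| + C)) / x := h4
  _ = φ y / y + (C + 2 * |φ y|) / x := by field_simp; ring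

lemma fk_one_var (φ : ℝ → ℝ) (hφ : ∀ a b : ℝ, 0 < a → 0 < b → φ (a + b) ≤ φ a + φ b)
    (hbdd : ∀ y : ℝ, 0 < y → ∃ C : ℝ, 0 ≤ C ∧ ∀ r : ℝ, y ≤ r → r ≤ 2 * y → φ r ≤ C) :
    Tendsto (fun x : ℝ => ((φ x / x : ℝ) : EReal)) atTop
      (𝓝 (⨅ x ∈ Set.Ioi (0 : ℝ), ((φ x / x : ℝ) : EReal))) := by
  set L : EReal := ⨅ x ∈ Set.Ioi (0 : ℝ), ((φ x / x : ℝ) : EReal) with hL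
  rw [tendsto_order]
  constructor
  · intro c hc
    filter_upwards [eventually_gt_atTop (0 : ℝ)] with x hx
    have : L ≤ ((φ x / x : ℝ) : EReal) := iInf₂_le x hx
    exact lt_of_lt_of_le hc this
  · intro c hc
    have : ∃ y ∈ Set.Ioi (0 : ℝ), ((φ y / y : ℝ) : EReal) < c := by
      by_contra hcon
      push_neg at hcon
      have : c ≤ L := le_iInf₂ hcon
      exact absurd hc (not_lt.2 this)
    obtain ⟨y, hy, hyc⟩ := this
    have hy : (0 : ℝ) < y := hy
    -- pick a real m with φ y / y < m and ↑m ≤ c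
    obtain ⟨m, hm1, hm2⟩ : ∃ m : ℝ, φ y / y < m ∧ ((m : ℝ) : EReal) ≤ c := by
      induction c with
      | bot => exact absurd hyc (by simp)
      | coe c => exact ⟨c, by exact_mod_cast hyc, le_refl _⟩
      | top => exact ⟨φ y / y + 1, by linarith, le_top⟩
    obtain ⟨C, hC0, hCb⟩ := hbdd y hy
    set B : ℝ := C + 2 * |φ y| with hB
    have hB0 : 0 ≤ B := by positivity
    set X : ℝ := max (2 * y) (B / (m - φ y / y) + 1) with hX
    filter_upwards [eventually_ge_atTop X] with x hxX
    have hx2y : 2 * y ≤ x := le_trans (le_max_left _ _) hxX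
    have hx0 : 0 < x := lt_of_lt_of_le (by linarith) hx2y
    have hkey := fk_key φ hφ y C x hy hC0 hCb hx2y
    have hlt : B / x < m - φ y / y := by
      rw [div_lt_iff₀ hx0]
      have hxgt : B / (m - φ y / y) < x := by
        have := le_trans (le_max_right (2 * y) (B / (m - φ y / y) + 1)) hxX
        linarith
      have hms : 0 < m - φ y / y := by linarith
      calc B = (B / (m - φ y / y)) * (m - φ y / y) := by
            rw [div_mul_cancel₀ _ (ne_of_gt hms)]
      _ < x * (m - φ y / y) := by
          apply mul_lt_mul_of_pos_right hxgt hms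
      _ = (m - φ y / y) * x := by ring
    have : φ x / x < m := by linarith
    calc ((φ x / x : ℝ) : EReal) < ((m : ℝ) : EReal) := by exact_mod_cast this
    _ ≤ c := hm2

lemma fk_box_core (f : ℝ → ℝ → ℝ)
    (hmeas : AEMeasurable (fun p : ℝ × ℝ => f p.1 p.2)
      (volume.restrict {p : ℝ × ℝ | 0 < p.1 ∧ 0 < p.2}))
    (h1 : ∀ x1 y1 x2 : ℝ, 0 < x1 → 0 < y1 → 0 < x2 →
      f (x1 + y1) x2 ≤ f x1 x2 + f y1 x2)
    (h2 : ∀ x1 x2 y2 : ℝ, 0 < x1 → 0 < x2 → 0 < y2 →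
      f x1 (x2 + y2) ≤ f x1 x2 + f x1 y2)
    (a1 a2 : ℝ) (ha1 : 0 < a1) (ha2 : 0 < a2) :
    ∃ C : ℝ, ∀ x1 x2 : ℝ, a1 ≤ x1 → x1 ≤ 7 / 4 * a1 → a2 ≤ x2 → x2 ≤ 7 / 4 * a2 →
      f x1 x2 ≤ C := by
  set Q : Set (ℝ × ℝ) := {p : ℝ × ℝ | 0 < p.1 ∧ 0 < p.2} with hQdef
  have hQ : MeasurableSet Q :=
    (measurableSet_lt measurable_const measurable_fst).inter
      (measurableSet_lt measurable_const measurable_snd)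
  set g : ℝ × ℝ → ℝ := hmeas.mk _ with hgdef
  have hg : Measurable g := hmeas.measurable_mk
  have hae : (fun p : ℝ × ℝ => f p.1 p.2) =ᵐ[volume.restrict Q] g := hmeas.ae_eq_mk
  set N0 : Set (ℝ × ℝ) := {p : ℝ × ℝ | ¬ f p.1 p.2 = g p} with hN0def
  have hN0 : volume.restrict Q N0 = 0 := ae_iff.1 hae
  have hN0' : volume (N0 ∩ Q) = 0 := by
    rw [← Measure.restrict_apply' hQ]; exact hN0
  set B : Set (ℝ × ℝ) := Set.Ioo (0 : ℝ) a1 ×ˢ Set.Ioo (0 : ℝ) a2 with hBdef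
  have hBm : MeasurableSet B := measurableSet_Ioo.prod measurableSet_Ioo
  have hBQ : B ⊆ Q := fun p hp => ⟨hp.1.1, hp.2.1⟩
  have hBvol : volume B = ENNReal.ofReal (a1 * a2) := by
    rw [hBdef, Measure.volume_eq_prod, Measure.prod_prod, Real.volume_Ioo, Real.volume_Ioo,
      sub_zero, sub_zero, ← ENNReal.ofReal_mul ha1.le]
  set N : Set (ℝ × ℝ) := toMeasurable volume (N0 ∩ B) with hNdef
  have hNm : MeasurableSet N := measurableSet_toMeasurable _ _
  have hNnull : volume N = 0 := by
    rw [hNdef, measure_toMeasurable]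
    exact le_antisymm (le_trans (measure_mono (Set.inter_subset_inter_right _ hBQ))
      (le_of_eq hN0')) (zero_le)
  have hsubN : N0 ∩ B ⊆ N := subset_toMeasurable _ _
  set D : ℕ → Set (ℝ × ℝ) := fun n => (B ∩ {p : ℝ × ℝ | (n : ℝ) < g p}) ∪ N with hDdef
  have hDm : ∀ n, MeasurableSet (D n) := fun n =>
    (hBm.inter (measurableSet_lt measurable_const hg)).union hNm
  have hanti : Antitone D := by
    intro n m hnm
    apply Set.union_subset_union_left
    apply Set.inter_subset_inter_right
    intro p hp
    have : ((n : ℝ)) ≤ (m : ℝ) := Nat.cast_le.2 hnm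
    exact lt_of_le_of_lt this hp
  have hint : (⋂ n, D n) ⊆ N := by
    intro p hp
    by_contra hpN
    obtain ⟨n, hn⟩ := exists_nat_ge (g p)
    have := Set.mem_iInter.1 hp n
    rcases this with h | h
    · exact absurd h.2 (not_lt.2 hn)
    · exact hpN h
  have hDfin : volume (D 0) ≠ ⊤ := by
    have : D 0 ⊆ B ∪ N := Set.union_subset_union_left _ Set.inter_subset_left
    have hle : volume (D 0) ≤ volume B + volume N :=
      le_trans (measure_mono this) (measure_union_le _ _)
    rw [hBvol, hNnull, add_zero] at hle
    exact ne_top_of_le_ne_top ENNReal.ofReal_ne_top hle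
  have htend : Tendsto (volume ∘ D) atTop (𝓝 (volume (⋂ n, D n))) :=
    tendsto_measure_iInter_atTop (fun n => (hDm n).nullMeasurableSet) hanti ⟨0, hDfin⟩
  have hlim : volume (⋂ n, D n) = 0 :=
    le_antisymm (le_trans (measure_mono hint) (le_of_eq hNnull)) (zero_le)
  set ε : ℝ≥0∞ := ENNReal.ofReal (a1 * a2 / 260) with hεdef
  have hε : (0 : ℝ≥0∞) < ε := ENNReal.ofReal_pos.2 (by positivity)
  have hev : ∀ᶠ n in atTop, volume (D n) < ε := by
    have : Tendsto (volume ∘ D) atTop (𝓝 0) := hlim ▸ htend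
    exact this.eventually_lt_const hε
  obtain ⟨n, hn⟩ := hev.exists
  set E : Set (ℝ × ℝ) := B \ D n with hEdef
  have hEm : MeasurableSet E := hBm.diff (hDm n)
  have hEprop : ∀ p : ℝ × ℝ, p ∈ E → f p.1 p.2 ≤ n := by
    intro p hp
    have hpB : p ∈ B := hp.1
    have hpD : p ∉ D n := hp.2
    have hgp : g p ≤ n := by
      by_contra hcon
      exact hpD (Or.inl ⟨hpB, lt_of_not_ge hcon⟩)
    have hfg : f p.1 p.2 = g p := by
      by_contra hcon
      exact hpD (Or.inr (hsubN ⟨hcon, hpB⟩))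
    linarith
  have hBE : volume (B \ E) < ε := by
    have : B \ E ⊆ D n := by
      intro p hp
      by_contra hc
      exact hp.2 ⟨hp.1, hc⟩
    exact lt_of_le_of_lt (measure_mono this) hn
  have hBEm : MeasurableSet (B \ E) := hBm.diff hEm
  refine ⟨4 * n, ?_⟩
  intro x1 x2 hx1 hx1' hx2 hx2'
  have hx10 : 0 < x1 := lt_of_lt_of_le ha1 hx1
  have hx20 : 0 < x2 := lt_of_lt_of_le ha2 hx2
  set s1 : ℝ → ℝ := fun t => x1 - t with hs1def
  set s2 : ℝ → ℝ := fun t => x2 - t with hs2def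
  have mp1 : MeasurePreserving (Prod.map s1 (id : ℝ → ℝ)) volume volume := by
    rw [Measure.volume_eq_prod]
    exact (Measure.measurePreserving_sub_left volume x1).prod (MeasurePreserving.id volume)
  have mp2 : MeasurePreserving (Prod.map (id : ℝ → ℝ) s2) volume volume := by
    rw [Measure.volume_eq_prod]
    exact (MeasurePreserving.id volume).prod (Measure.measurePreserving_sub_left volume x2)
  have mp3 : MeasurePreserving (Prod.map s1 s2) volume volume := by
    rw [Measure.volume_eq_prod]
    exact (Measure.measurePreserving_sub_left volume x1).prod
      (Measure.measurePreserving_sub_left volume x2)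
  set S : Set (ℝ × ℝ) := E ∩ (Prod.map s1 (id : ℝ → ℝ) ⁻¹' E) ∩
    (Prod.map (id : ℝ → ℝ) s2 ⁻¹' E) ∩ (Prod.map s1 s2 ⁻¹' E) with hSdef
  set B'' : Set (ℝ × ℝ) := Set.Ioo (x1 - a1) a1 ×ˢ Set.Ioo (x2 - a2) a2 with hB''def
  have hmemB : ∀ p : ℝ × ℝ, p ∈ B'' →
      p ∈ B ∧ (s1 p.1, p.2) ∈ B ∧ (p.1, s2 p.2) ∈ B ∧ (s1 p.1, s2 p.2) ∈ B := by
    intro p hp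
    obtain ⟨⟨hp1a, hp1b⟩, hp2a, hp2b⟩ := hp
    have e1 : 0 < p.1 := by linarith
    have e2 : 0 < p.2 := by linarith
    have e3 : 0 < x1 - p.1 := by linarith
    have e4 : x1 - p.1 < a1 := by linarith
    have e5 : 0 < x2 - p.2 := by linarith
    have e6 : x2 - p.2 < a2 := by linarith
    exact ⟨⟨⟨e1, hp1b⟩, e2, hp2b⟩, ⟨⟨e3, e4⟩, e2, hp2b⟩, ⟨⟨e1, hp1b⟩, e5, e6⟩,
      ⟨⟨e3, e4⟩, e5, e6⟩⟩
  have hcover : B'' \ S ⊆ ((B \ E) ∪ (Prod.map s1 (id : ℝ → ℝ) ⁻¹' (B \ E))) ∪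
      ((Prod.map (id : ℝ → ℝ) s2 ⁻¹' (B \ E)) ∪ (Prod.map s1 s2 ⁻¹' (B \ E))) := by
    intro p hp
    obtain ⟨hp'', hpS⟩ := hp
    obtain ⟨m0, m1, m2, m3⟩ := hmemB p hp''
    by_cases c0 : p ∈ E
    · by_cases c1 : (s1 p.1, p.2) ∈ E
      · by_cases c2 : (p.1, s2 p.2) ∈ E
        · by_cases c3 : (s1 p.1, s2 p.2) ∈ E
          · exact absurd ⟨⟨⟨c0, c1⟩, c2⟩, c3⟩ hpS
          · exact Or.inr (Or.inr ⟨m3, c3⟩)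
        · exact Or.inr (Or.inl ⟨m2, c2⟩)
      · exact Or.inl (Or.inr ⟨m1, c1⟩)
    · exact Or.inl (Or.inl ⟨m0, c0⟩)
  have hmeasS : volume (B'' \ S) < 4 * ε := by
    have v1 : volume (Prod.map s1 (id : ℝ → ℝ) ⁻¹' (B \ E)) = volume (B \ E) :=
      mp1.measure_preimage hBEm.nullMeasurableSet
    have v2 : volume (Prod.map (id : ℝ → ℝ) s2 ⁻¹' (B \ E)) = volume (B \ E) :=
      mp2.measure_preimage hBEm.nullMeasurableSet
    have v3 : volume (Prod.map s1 s2 ⁻¹' (B \ E)) = volume (B \ E) :=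
      mp3.measure_preimage hBEm.nullMeasurableSet
    calc volume (B'' \ S) ≤
        volume (((B \ E) ∪ (Prod.map s1 (id : ℝ → ℝ) ⁻¹' (B \ E))) ∪
          ((Prod.map (id : ℝ → ℝ) s2 ⁻¹' (B \ E)) ∪ (Prod.map s1 s2 ⁻¹' (B \ E)))) :=
          measure_mono hcover
    _ ≤ (volume (B \ E) + volume (Prod.map s1 (id : ℝ → ℝ) ⁻¹' (B \ E))) +
        (volume (Prod.map (id : ℝ → ℝ) s2 ⁻¹' (B \ E)) + volume (Prod.map s1 s2 ⁻¹' (B \ E))) :=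
          le_trans (measure_union_le _ _) (add_le_add (measure_union_le _ _) (measure_union_le _ _))
    _ = volume (B \ E) + volume (B \ E) + (volume (B \ E) + volume (B \ E)) := by
          rw [v1, v2, v3]
    _ < ε + ε + (ε + ε) := by
          have h4 : volume (B \ E) < ε := hBE
          exact ENNReal.add_lt_add (ENNReal.add_lt_add h4 h4) (ENNReal.add_lt_add h4 h4)
    _ = 4 * ε := by ring
  have hB''vol : volume B'' = ENNReal.ofReal ((a1 - (x1 - a1)) * (a2 - (x2 - a2))) := by
    rw [hB''def, Measure.volume_eq_prod, Measure.prod_prod, Real.volume_Ioo, Real.volume_Ioo,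
      ← ENNReal.ofReal_mul (by linarith)]
  have hvollt : volume (B'' \ S) < volume B'' := by
    apply lt_of_lt_of_le hmeasS
    rw [hB''vol]
    have h4e : (4 : ℝ≥0∞) * ε = ENNReal.ofReal (4 * (a1 * a2 / 260)) := by
      rw [ENNReal.ofReal_mul (by norm_num : (0:ℝ) ≤ 4)]
      norm_num [hεdef]
    rw [h4e]
    apply ENNReal.ofReal_le_ofReal
    nlinarith
  have hSne : ∃ p : ℝ × ℝ, p ∈ B'' ∧ p ∈ S := by
    by_contra hcon
    push_neg at hcon
    have : B'' ⊆ B'' \ S := fun p hp => ⟨hp, hcon p hp⟩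
    exact absurd (measure_mono this) (not_le.2 hvollt)
  obtain ⟨p, hp'', hpS⟩ := hSne
  obtain ⟨⟨⟨c0, c1⟩, c2⟩, c3⟩ := hpS
  obtain ⟨⟨hp1a, hp1b⟩, hp2a, hp2b⟩ := hp''
  have e1 : 0 < p.1 := by linarith
  have e2 : 0 < p.2 := by linarith
  have e3 : 0 < x1 - p.1 := by linarith
  have e5 : 0 < x2 - p.2 := by linarith
  have b0 : f p.1 p.2 ≤ n := hEprop _ c0
  have b1 : f (x1 - p.1) p.2 ≤ n := hEprop _ c1
  have b2 : f p.1 (x2 - p.2) ≤ n := hEprop _ c2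
  have b3 : f (x1 - p.1) (x2 - p.2) ≤ n := hEprop _ c3
  have step1 : f x1 x2 ≤ f p.1 x2 + f (x1 - p.1) x2 := by
    have := h1 p.1 (x1 - p.1) x2 e1 e3 hx20
    rwa [add_sub_cancel] at this
  have step2 : f p.1 x2 ≤ f p.1 p.2 + f p.1 (x2 - p.2) := by
    have := h2 p.1 p.2 (x2 - p.2) e1 e2 e5
    rwa [add_sub_cancel] at this
  have step3 : f (x1 - p.1) x2 ≤ f (x1 - p.1) p.2 + f (x1 - p.1) (x2 - p.2) := by
    have := h2 (x1 - p.1) p.2 (x2 - p.2) e3 e2 e5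
    rwa [add_sub_cancel] at this
  linarith

lemma fk_box (f : ℝ → ℝ → ℝ)
    (hmeas : AEMeasurable (fun p : ℝ × ℝ => f p.1 p.2)
      (volume.restrict {p : ℝ × ℝ | 0 < p.1 ∧ 0 < p.2}))
    (h1 : ∀ x1 y1 x2 : ℝ, 0 < x1 → 0 < y1 → 0 < x2 →
      f (x1 + y1) x2 ≤ f x1 x2 + f y1 x2)
    (h2 : ∀ x1 x2 y2 : ℝ, 0 < x1 → 0 < x2 → 0 < y2 →
      f x1 (x2 + y2) ≤ f x1 x2 + f x1 y2) :
    ∀ y1 y2 : ℝ, 0 < y1 → 0 < y2 → ∃ C : ℝ, 0 ≤ C ∧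
      ∀ x1 x2 : ℝ, y1 ≤ x1 → x1 ≤ 2 * y1 → y2 ≤ x2 → x2 ≤ 2 * y2 → f x1 x2 ≤ C := by
  intro y1 y2 hy1 hy2
  obtain ⟨C1, hC1⟩ := fk_box_core f hmeas h1 h2 y1 y2 hy1 hy2
  obtain ⟨C2, hC2⟩ := fk_box_core f hmeas h1 h2 (8 / 7 * y1) y2 (by linarith) hy2
  obtain ⟨C3, hC3⟩ := fk_box_core f hmeas h1 h2 y1 (8 / 7 * y2) hy1 (by linarith)
  obtain ⟨C4, hC4⟩ := fk_box_core f hmeas h1 h2 (8 / 7 * y1) (8 / 7 * y2)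
    (by linarith) (by linarith)
  refine ⟨max 0 (max (max C1 C2) (max C3 C4)), le_max_left _ _, ?_⟩
  intro x1 x2 ha hb hc hd
  have m1 : C1 ≤ max 0 (max (max C1 C2) (max C3 C4)) :=
    le_trans (le_trans (le_max_left _ _) (le_max_left _ _)) (le_max_right _ _)
  have m2 : C2 ≤ max 0 (max (max C1 C2) (max C3 C4)) :=
    le_trans (le_trans (le_max_right _ _) (le_max_left _ _)) (le_max_right _ _)
  have m3 : C3 ≤ max 0 (max (max C1 C2) (max C3 C4)) :=
    le_trans (le_trans (le_max_left _ _) (le_max_right _ _)) (le_max_right _ _)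
  have m4 : C4 ≤ max 0 (max (max C1 C2) (max C3 C4)) :=
    le_trans (le_trans (le_max_right _ _) (le_max_right _ _)) (le_max_right _ _)
  rcases le_or_gt x1 (7 / 4 * y1) with hx1 | hx1 <;>
    rcases le_or_gt x2 (7 / 4 * y2) with hx2 | hx2
  · exact le_trans (hC1 x1 x2 ha hx1 hc hx2) m1
  · exact le_trans (hC3 x1 x2 ha hx1 (by linarith) (by linarith)) m3
  · exact le_trans (hC2 x1 x2 (by linarith) (by linarith) hc hx2) m2
  · exact le_trans (hC4 x1 x2 (by linarith) (by linarith) (by linarith) (by linarith)) m4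

lemma fk_part2 (f : ℝ → ℝ → ℝ)
    (h1 : ∀ x1 y1 x2 : ℝ, 0 < x1 → 0 < y1 → 0 < x2 →
      f (x1 + y1) x2 ≤ f x1 x2 + f y1 x2)
    (h2 : ∀ x1 x2 y2 : ℝ, 0 < x1 → 0 < x2 → 0 < y2 →
      f x1 (x2 + y2) ≤ f x1 x2 + f x1 y2)
    (hbox : ∀ y1 y2 : ℝ, 0 < y1 → 0 < y2 → ∃ C : ℝ, 0 ≤ C ∧
      ∀ x1 x2 : ℝ, y1 ≤ x1 → x1 ≤ 2 * y1 → y2 ≤ x2 → x2 ≤ 2 * y2 → f x1 x2 ≤ C) :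
    ∃ g : ℝ → EReal,
      (∀ x1 : ℝ, 0 < x1 →
        Tendsto (fun x2 : ℝ => ((f x1 x2 / (x1 * x2) : ℝ) : EReal)) atTop
          (𝓝 (g x1))) ∧
      Tendsto g atTop
        (𝓝 (⨅ x1 ∈ Set.Ioi (0 : ℝ), ⨅ x2 ∈ Set.Ioi (0 : ℝ),
          ((f x1 x2 / (x1 * x2) : ℝ) : EReal))) := by
  refine ⟨fun x1 => ⨅ x2 ∈ Set.Ioi (0 : ℝ), ((f x1 x2 / (x1 * x2) : ℝ) : EReal), ?_, ?_⟩
  · intro x1 hx1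
    have hφ : ∀ a b : ℝ, 0 < a → 0 < b →
        f x1 (a + b) / x1 ≤ f x1 a / x1 + f x1 b / x1 := by
      intro a b ha hb
      rw [← add_div]
      gcongr
      exact h2 x1 a b hx1 ha hb
    have hbdd : ∀ y : ℝ, 0 < y → ∃ C : ℝ, 0 ≤ C ∧
        ∀ r : ℝ, y ≤ r → r ≤ 2 * y → f x1 r / x1 ≤ C := by
      intro y hy
      obtain ⟨C, hC0, hCb⟩ := hbox x1 y hx1 hy
      refine ⟨C / x1, div_nonneg hC0 hx1.le, ?_⟩
      intro r hr1 hr2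
      gcongr
      exact hCb x1 r le_rfl (by linarith) hr1 hr2
    have htt := fk_one_var (fun t => f x1 t / x1) hφ hbdd
    simp only [div_div] at htt
    exact htt
  · rw [tendsto_order]
    constructor
    · intro c hc
      filter_upwards [eventually_gt_atTop (0 : ℝ)] with x1 hx1
      exact lt_of_lt_of_le hc (iInf₂_le x1 hx1)
    · intro c hc
      have hex : ∃ y1 : ℝ, 0 < y1 ∧ ∃ y2 : ℝ, 0 < y2 ∧
          ((f y1 y2 / (y1 * y2) : ℝ) : EReal) < c := by
        by_contra hcon
        push_neg at hcon
        have : c ≤ ⨅ x1 ∈ Set.Ioi (0 : ℝ), ⨅ x2 ∈ Set.Ioi (0 : ℝ),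
            ((f x1 x2 / (x1 * x2) : ℝ) : EReal) :=
          le_iInf₂ fun y1 hy1 => le_iInf₂ fun y2 hy2 => hcon y1 hy1 y2 hy2
        exact absurd hc (not_lt.2 this)
      obtain ⟨y1, hy1, y2, hy2, hval⟩ := hex
      obtain ⟨m, hm1, hm2⟩ : ∃ m : ℝ, f y1 y2 / (y1 * y2) < m ∧ ((m : ℝ) : EReal) ≤ c := by
        induction c with
        | bot => exact absurd hval (by simp)
        | coe c => exact ⟨c, by exact_mod_cast hval, le_refl _⟩
        | top => exact ⟨f y1 y2 / (y1 * y2) + 1, by linarith, le_top⟩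
      obtain ⟨C, hC0, hCb⟩ := hbox y1 y2 hy1 hy2
      have hφ : ∀ a b : ℝ, 0 < a → 0 < b → f (a + b) y2 ≤ f a y2 + f b y2 :=
        fun a b ha hb => h1 a b y2 ha hb hy2
      have hCb' : ∀ r : ℝ, y1 ≤ r → r ≤ 2 * y1 → f r y2 ≤ C :=
        fun r h h' => hCb r y2 h h' le_rfl (by linarith)
      set B : ℝ := C + 2 * |f y1 y2| with hB
      have hB0 : 0 ≤ B := by positivity
      set d : ℝ := f y1 y2 / (y1 * y2) with hd
      set X : ℝ := max (2 * y1) ((B / y2) / (m - d) + 1) with hX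
      filter_upwards [eventually_ge_atTop X] with x hxX
      have hx2y : 2 * y1 ≤ x := le_trans (le_max_left _ _) hxX
      have hx0 : 0 < x := lt_of_lt_of_le (by linarith) hx2y
      have hkey := fk_key (fun t => f t y2) hφ y1 C x hy1 hC0 hCb' hx2y
      -- f x y2 / (x * y2) ≤ d + (B / y2) / x
      have hstep : f x y2 / (x * y2) ≤ d + (B / y2) / x := by
        have e1 : f x y2 / (x * y2) = (f x y2 / x) / y2 := by rw [div_div]
        have e2 : (f x y2 / x) / y2 ≤ (f y1 y2 / y1 + B / x) / y2 := by
          gcongr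
        have e3 : (f y1 y2 / y1 + B / x) / y2 = d + (B / y2) / x := by
          rw [hd]
          field_simp
        rw [e1]
        rw [← e3]
        exact e2
      have hms : 0 < m - d := by rw [hd] at hm1 ⊢; linarith
      have hxgt : (B / y2) / (m - d) < x := by
        have := le_trans (le_max_right (2 * y1) ((B / y2) / (m - d) + 1)) hxX
        linarith
      have hlt2 : (B / y2) / x < m - d := by
        rw [div_lt_iff₀ hx0]
        calc B / y2 = ((B / y2) / (m - d)) * (m - d) := by
              rw [div_mul_cancel₀ _ (ne_of_gt hms)]
        _ < x * (m - d) := mul_lt_mul_of_pos_right hxgt hms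
        _ = (m - d) * x := by ring
      have hfin : f x y2 / (x * y2) < m := by linarith
      have hle : (⨅ x2 ∈ Set.Ioi (0 : ℝ), ((f x x2 / (x * x2) : ℝ) : EReal)) ≤
          ((f x y2 / (x * y2) : ℝ) : EReal) := iInf₂_le y2 hy2
      calc (⨅ x2 ∈ Set.Ioi (0 : ℝ), ((f x x2 / (x * x2) : ℝ) : EReal)) ≤
          ((f x y2 / (x * y2) : ℝ) : EReal) := hle
      _ < ((m : ℝ) : EReal) := by exact_mod_cast hfin
      _ ≤ c := hm2

lemma fk_part1 (f : ℝ → ℝ → ℝ)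
    (h1 : ∀ x1 y1 x2 : ℝ, 0 < x1 → 0 < y1 → 0 < x2 →
      f (x1 + y1) x2 ≤ f x1 x2 + f y1 x2)
    (h2 : ∀ x1 x2 y2 : ℝ, 0 < x1 → 0 < x2 → 0 < y2 →
      f x1 (x2 + y2) ≤ f x1 x2 + f x1 y2)
    (hbox : ∀ y1 y2 : ℝ, 0 < y1 → 0 < y2 → ∃ C : ℝ, 0 ≤ C ∧
      ∀ x1 x2 : ℝ, y1 ≤ x1 → x1 ≤ 2 * y1 → y2 ≤ x2 → x2 ≤ 2 * y2 → f x1 x2 ≤ C) :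
    ∀ I : ℝ,
      (⨅ x1 ∈ Set.Ioi (0 : ℝ), ⨅ x2 ∈ Set.Ioi (0 : ℝ),
        ((f x1 x2 / (x1 * x2) : ℝ) : EReal)) = (I : EReal) →
      ∀ δ : ℝ, 0 < δ → ∃ R : ℝ, 0 < R ∧ ∀ x1 x2 : ℝ, R < x1 → R < x2 →
        f x1 x2 / (x1 * x2) < I + δ := by
  intro I hI δ hδ
  have hex : ∃ y1 : ℝ, 0 < y1 ∧ ∃ y2 : ℝ, 0 < y2 ∧ f y1 y2 / (y1 * y2) < I + δ / 2 := by
    by_contra hcon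
    push_neg at hcon
    have hle : ((I + δ / 2 : ℝ) : EReal) ≤ ⨅ x1 ∈ Set.Ioi (0 : ℝ),
        ⨅ x2 ∈ Set.Ioi (0 : ℝ), ((f x1 x2 / (x1 * x2) : ℝ) : EReal) :=
      le_iInf₂ fun y1 hy1 => le_iInf₂ fun y2 hy2 => by
        exact_mod_cast hcon y1 hy1 y2 hy2
    rw [hI] at hle
    have : I + δ / 2 ≤ I := by exact_mod_cast hle
    linarith
  obtain ⟨y1, hy1, y2, hy2, hval⟩ := hex
  obtain ⟨C, hC0, hCb⟩ := hbox y1 y2 hy1 hy2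
  set F : ℝ := f y1 y2 with hF
  set D : ℝ := (2 * |F| + C) / y1 + (2 * |F| + C) / y2 + C with hD
  have hD0 : 0 ≤ D := by
    have t1 : 0 ≤ (2 * |F| + C) / y1 := div_nonneg (by positivity) hy1.le
    have t2 : 0 ≤ (2 * |F| + C) / y2 := div_nonneg (by positivity) hy2.le
    rw [hD]
    linarith
  set R : ℝ := max (max (2 * y1) (2 * y2)) (max 1 (2 * D / δ + 1)) with hR
  have hR1 : (1 : ℝ) ≤ R := le_trans (le_max_left 1 _) (le_max_right _ _)
  have hR0 : 0 < R := lt_of_lt_of_le one_pos hR1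
  refine ⟨R, hR0, ?_⟩
  intro x1 x2 hx1R hx2R
  have hx12y : 2 * y1 ≤ x1 :=
    le_of_lt (lt_of_le_of_lt (le_trans (le_max_left _ _) (le_max_left _ _)) hx1R)
  have hx22y : 2 * y2 ≤ x2 :=
    le_of_lt (lt_of_le_of_lt (le_trans (le_max_right _ _) (le_max_left _ _)) hx2R)
  have hx11 : (1 : ℝ) ≤ x1 := le_of_lt (lt_of_le_of_lt hR1 hx1R)
  have hx21 : (1 : ℝ) ≤ x2 := le_of_lt (lt_of_le_of_lt hR1 hx2R)
  have hx10 : 0 < x1 := lt_of_lt_of_le one_pos hx11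
  have hx20 : 0 < x2 := lt_of_lt_of_le one_pos hx21
  obtain ⟨k, r1, hx1e, hr11, hr12, hk1, hk2, hk3⟩ := fk_decomp y1 x1 hy1 hx12y
  obtain ⟨l, r2, hx2e, hr21, hr22, hl1, hl2, hl3⟩ := fk_decomp y2 x2 hy2 hx22y
  have hr10 : 0 < r1 := lt_of_lt_of_le hy1 hr11
  have hr20 : 0 < r2 := lt_of_lt_of_le hy2 hr21
  have step1 : f x1 x2 ≤ (k : ℝ) * f y1 x2 + f r1 x2 := by
    rw [hx1e]
    exact fk_smul (fun t => f t x2) (fun a b ha hb => h1 a b x2 ha hb hx20) y1 hy1 k r1 hr10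
  have step2 : f y1 x2 ≤ (l : ℝ) * F + C := by
    have := fk_smul (fun t => f y1 t) (fun a b ha hb => h2 y1 a b hy1 ha hb) y2 hy2 l r2 hr20
    rw [← hx2e] at this
    have hb : f y1 r2 ≤ C := hCb y1 r2 le_rfl (by linarith) hr21 hr22
    rw [hF]
    linarith
  have step3 : f r1 x2 ≤ (l : ℝ) * C + C := by
    have := fk_smul (fun t => f r1 t) (fun a b ha hb => h2 r1 a b hr10 ha hb) y2 hy2 l r2 hr20
    rw [← hx2e] at this
    have hb1 : f r1 y2 ≤ C := hCb r1 y2 hr11 hr12 le_rfl (by linarith)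
    have hb2 : f r1 r2 ≤ C := hCb r1 r2 hr11 hr12 hr21 hr22
    have hlm : (l : ℝ) * f r1 y2 ≤ (l : ℝ) * C :=
      mul_le_mul_of_nonneg_left hb1 (by linarith)
    linarith
  have hcomb : f x1 x2 ≤ (k : ℝ) * (l : ℝ) * F + (k : ℝ) * C + (l : ℝ) * C + C := by
    have hkC : (k : ℝ) * f y1 x2 ≤ (k : ℝ) * ((l : ℝ) * F + C) :=
      mul_le_mul_of_nonneg_left step2 (by linarith)
    have hdist : (k : ℝ) * ((l : ℝ) * F + C) = (k : ℝ) * (l : ℝ) * F + (k : ℝ) * C := by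
      ring
    linarith
  set u : ℝ := x1 / y1 with hu
  set v : ℝ := x2 / y2 with hv
  have hu2 : (2 : ℝ) ≤ u := (le_div_iff₀ hy1).2 (by linarith)
  have hv2 : (2 : ℝ) ≤ v := (le_div_iff₀ hy2).2 (by linarith)
  have hklF : (k : ℝ) * (l : ℝ) * F ≤ u * v * F + 2 * |F| * (u + v) := by
    rcases abs_cases F with ⟨ha, hb⟩ | ⟨ha, hb⟩
    · have hkl : (k : ℝ) * (l : ℝ) ≤ u * v :=
        mul_le_mul hk2 hl2 (by linarith) (by linarith)
      have hm1 : (k : ℝ) * (l : ℝ) * F ≤ u * v * F :=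
        mul_le_mul_of_nonneg_right hkl hb
      have hm2 : 0 ≤ F * (u + v) := mul_nonneg hb (by linarith)
      rw [ha]
      linarith
    · have hkl : (u - 2) * (v - 2) ≤ (k : ℝ) * (l : ℝ) :=
        mul_le_mul (by linarith) (by linarith) (by linarith) (by linarith)
      have hm1 : (k : ℝ) * (l : ℝ) * F ≤ (u - 2) * (v - 2) * F :=
        mul_le_mul_of_nonpos_right hkl hb.le
      have hexp : (u - 2) * (v - 2) * F = u * v * F - 2 * F * (u + v) + 4 * F := by
        ring
      rw [ha]
      linarith
  have htot : f x1 x2 ≤ u * v * F + 2 * |F| * (u + v) + u * C + v * C + C := by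
    have hkC2 : (k : ℝ) * C ≤ u * C := mul_le_mul_of_nonneg_right hk2 hC0
    have hlC2 : (l : ℝ) * C ≤ v * C := mul_le_mul_of_nonneg_right hl2 hC0
    linarith
  have hdiv : f x1 x2 / (x1 * x2) ≤
      (u * v * F + 2 * |F| * (u + v) + u * C + v * C + C) / (x1 * x2) := by
    gcongr
  have heq : (u * v * F + 2 * |F| * (u + v) + u * C + v * C + C) / (x1 * x2) =
      F / (y1 * y2) + ((2 * |F| + C) / y1) / x2 + ((2 * |F| + C) / y2) / x1 +
        C / (x1 * x2) := by
    rw [hu, hv]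
    field_simp
    ring
  have ht1 : ((2 * |F| + C) / y1) / x2 ≤ ((2 * |F| + C) / y1) / R := by
    have hnum : 0 ≤ (2 * |F| + C) / y1 := div_nonneg (by positivity) hy1.le
    exact div_le_div_of_nonneg_left hnum hR0 (by linarith)
  have ht2 : ((2 * |F| + C) / y2) / x1 ≤ ((2 * |F| + C) / y2) / R := by
    have hnum : 0 ≤ (2 * |F| + C) / y2 := div_nonneg (by positivity) hy2.le
    exact div_le_div_of_nonneg_left hnum hR0 (by linarith)
  have ht3 : C / (x1 * x2) ≤ C / R := by
    have hx1le : x1 ≤ x1 * x2 := le_mul_of_one_le_right (by linarith) hx21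
    exact div_le_div_of_nonneg_left hC0 hR0 (by linarith)
  have hsum : ((2 * |F| + C) / y1) / R + ((2 * |F| + C) / y2) / R + C / R = D / R := by
    rw [hD]; rw [← add_div, ← add_div]
  have hDR : D / R < δ / 2 := by
    rw [div_lt_iff₀ hR0]
    have hRge : 2 * D / δ + 1 ≤ R := le_trans (le_max_right _ _) (le_max_right _ _)
    have h1' : (δ / 2) * (2 * D / δ + 1) ≤ (δ / 2) * R :=
      mul_le_mul_of_nonneg_left hRge (by linarith)
    have h2' : (δ / 2) * (2 * D / δ + 1) = D + δ / 2 := by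
      field_simp
    linarith
  have : f x1 x2 / (x1 * x2) ≤ F / (y1 * y2) + D / R := by
    rw [heq] at hdiv
    linarith
  have hFv : F / (y1 * y2) < I + δ / 2 := hval
  linarith

/-- **Fekete's lemma for two positive real variables.**  Let `f` be Lebesgue
measurable on `ℝ_{>0}²` and subadditive in each variable however given the other.
Then:
(1) if `I = inf_{x₁,x₂>0} f(x₁,x₂)/(x₁x₂)` is finite, for every `δ > 0` there is
`R > 0` such that `f(x₁,x₂)/(x₁x₂) < I + δ` whenever `x₁, x₂ > R`; and
(2) the two iterated limits `lim_{x₁→∞} lim_{x₂→∞}` and `lim_{x₂→∞} lim_{x₁→∞}`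
of `f(x₁,x₂)/(x₁x₂)` exist in `ℝ ∪ {−∞}` and both equal the infimum. -/
theorem fekete_lemma_two_pos_real_variables
    (f : ℝ → ℝ → ℝ)
    (hmeas : AEMeasurable (fun p : ℝ × ℝ => f p.1 p.2)
      (volume.restrict {p : ℝ × ℝ | 0 < p.1 ∧ 0 < p.2}))
    (h1 : ∀ x1 y1 x2 : ℝ, 0 < x1 → 0 < y1 → 0 < x2 →
      f (x1 + y1) x2 ≤ f x1 x2 + f y1 x2)
    (h2 : ∀ x1 x2 y2 : ℝ, 0 < x1 → 0 < x2 → 0 < y2 →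
      f x1 (x2 + y2) ≤ f x1 x2 + f x1 y2) :
    (∀ I : ℝ,
      (⨅ x1 ∈ Set.Ioi (0 : ℝ), ⨅ x2 ∈ Set.Ioi (0 : ℝ),
        ((f x1 x2 / (x1 * x2) : ℝ) : EReal)) = (I : EReal) →
      ∀ δ : ℝ, 0 < δ → ∃ R : ℝ, 0 < R ∧ ∀ x1 x2 : ℝ, R < x1 → R < x2 →
        f x1 x2 / (x1 * x2) < I + δ) ∧
    (∃ g : ℝ → EReal,
      (∀ x1 : ℝ, 0 < x1 →
        Tendsto (fun x2 : ℝ => ((f x1 x2 / (x1 * x2) : ℝ) : EReal)) atTop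
          (𝓝 (g x1))) ∧
      Tendsto g atTop
        (𝓝 (⨅ x1 ∈ Set.Ioi (0 : ℝ), ⨅ x2 ∈ Set.Ioi (0 : ℝ),
          ((f x1 x2 / (x1 * x2) : ℝ) : EReal)))) ∧
    (∃ g : ℝ → EReal,
      (∀ x2 : ℝ, 0 < x2 →
        Tendsto (fun x1 : ℝ => ((f x1 x2 / (x1 * x2) : ℝ) : EReal)) atTop
          (𝓝 (g x2))) ∧
      Tendsto g atTop
        (𝓝 (⨅ x1 ∈ Set.Ioi (0 : ℝ), ⨅ x2 ∈ Set.Ioi (0 : ℝ),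
          ((f x1 x2 / (x1 * x2) : ℝ) : EReal)))) := by
  have hbox := fk_box f hmeas h1 h2
  refine ⟨fk_part1 f h1 h2 hbox, fk_part2 f h1 h2 hbox, ?_⟩
  -- third part: apply part 2 to the swapped function
  set f' : ℝ → ℝ → ℝ := fun a b => f b a with hf'
  have h1' : ∀ x1 y1 x2 : ℝ, 0 < x1 → 0 < y1 → 0 < x2 →
      f' (x1 + y1) x2 ≤ f' x1 x2 + f' y1 x2 :=
    fun a b c ha hb hc => h2 c a b hc ha hb
  have h2' : ∀ x1 x2 y2 : ℝ, 0 < x1 → 0 < x2 → 0 < y2 →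
      f' x1 (x2 + y2) ≤ f' x1 x2 + f' x1 y2 :=
    fun a b c ha hb hc => h1 b c a hb hc ha
  have hbox' : ∀ y1 y2 : ℝ, 0 < y1 → 0 < y2 → ∃ C : ℝ, 0 ≤ C ∧
      ∀ x1 x2 : ℝ, y1 ≤ x1 → x1 ≤ 2 * y1 → y2 ≤ x2 → x2 ≤ 2 * y2 → f' x1 x2 ≤ C := by
    intro y1 y2 hy1 hy2
    obtain ⟨C, hC0, hCb⟩ := hbox y2 y1 hy2 hy1
    exact ⟨C, hC0, fun x1 x2 ha hb hc hd => hCb x2 x1 hc hd ha hb⟩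
  obtain ⟨g, hg1, hg2⟩ := fk_part2 f' h1' h2' hbox'
  refine ⟨g, ?_, ?_⟩
  · intro x2 hx2
    have heq : (fun x1 : ℝ => ((f x1 x2 / (x1 * x2) : ℝ) : EReal)) =
        (fun x1 : ℝ => ((f' x2 x1 / (x2 * x1) : ℝ) : EReal)) := by
      funext x1
      rw [hf']
      norm_num [mul_comm]
    rw [heq]
    exact hg1 x2 hx2
  · have heq : (⨅ x1 ∈ Set.Ioi (0 : ℝ), ⨅ x2 ∈ Set.Ioi (0 : ℝ),
        ((f' x1 x2 / (x1 * x2) : ℝ) : EReal)) =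
        (⨅ x1 ∈ Set.Ioi (0 : ℝ), ⨅ x2 ∈ Set.Ioi (0 : ℝ),
        ((f x1 x2 / (x1 * x2) : ℝ) : EReal)) := by
      apply le_antisymm
      · apply le_iInf₂
        intro x1 hx1
        apply le_iInf₂
        intro x2 hx2
        have s1 : (⨅ a ∈ Set.Ioi (0 : ℝ), ⨅ b ∈ Set.Ioi (0 : ℝ),
            ((f' a b / (a * b) : ℝ) : EReal)) ≤
            ⨅ b ∈ Set.Ioi (0 : ℝ), ((f' x2 b / (x2 * b) : ℝ) : EReal) := iInf₂_le x2 hx2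
        have s2 : (⨅ b ∈ Set.Ioi (0 : ℝ), ((f' x2 b / (x2 * b) : ℝ) : EReal)) ≤
            ((f' x2 x1 / (x2 * x1) : ℝ) : EReal) := iInf₂_le x1 hx1
        have s3 : ((f' x2 x1 / (x2 * x1) : ℝ) : EReal) =
            ((f x1 x2 / (x1 * x2) : ℝ) : EReal) := by
          rw [hf']; norm_num [mul_comm]
        exact le_trans s1 (le_trans s2 (le_of_eq s3))
      · apply le_iInf₂
        intro x1 hx1
        apply le_iInf₂
        intro x2 hx2
        have s1 : (⨅ a ∈ Set.Ioi (0 : ℝ), ⨅ b ∈ Set.Ioi (0 : ℝ),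
            ((f a b / (a * b) : ℝ) : EReal)) ≤
            ⨅ b ∈ Set.Ioi (0 : ℝ), ((f x2 b / (x2 * b) : ℝ) : EReal) := iInf₂_le x2 hx2
        have s2 : (⨅ b ∈ Set.Ioi (0 : ℝ), ((f x2 b / (x2 * b) : ℝ) : EReal)) ≤
            ((f x2 x1 / (x2 * x1) : ℝ) : EReal) := iInf₂_le x1 hx1
        have s3 : ((f x2 x1 / (x2 * x1) : ℝ) : EReal) =
            ((f' x1 x2 / (x1 * x2) : ℝ) : EReal) := by
          rw [hf']; norm_num [mul_comm]
        exact le_trans s1 (le_trans s2 (le_of_eq s3))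
    rw [← heq]
    exact hg2
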